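/- Define J₁(x) = (1/2)log 2 − (1/2)x√(x²−2) − log(−x + √(x²−2)) for x ≤ −√2 (and +∞ for x > −√2), and φ(x) = −x²/2 − μx/√(−D''(0)) where μ > √(−2D''(0)) and D''(0)<0. Then the function x ↦ φ(x) − J₁(x) on (−∞, −√2] attains its maximum at x* = −μ/√(−4D''(0)) − √(−D''(0))/μ, which satisfies x* < −√2, and the maximal value is μ²/(−4D''(0)) + log(μ/√(−2D''(0))) + 1/2. -/

import Mathlib

open Real


private lemma aux_mono (f : ℝ → ℝ) (f' : ℝ → ℝ)
    (hd : ∀ x : ℝ, 1 ≤ x → HasDerivAt f (f' x) x)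
    (h0 : ∀ x : ℝ, 1 < x → 0 ≤ f' x) {w : ℝ} (hw : 1 ≤ w) :
    f 1 ≤ f w := by
  have hmono : MonotoneOn f (Set.Ici (1:ℝ)) := by
    apply monotoneOn_of_deriv_nonneg (convex_Ici 1)
    · exact fun x hx => (hd x hx).continuousAt.continuousWithinAt
    · intro x hx
      rw [interior_Ici] at hx
      exact (hd x hx.le).differentiableAt.differentiableWithinAt
    · intro x hx
      rw [interior_Ici] at hx
      rw [(hd x hx.le).deriv]
      exact h0 x hx
  exact hmono (by simp) hw hw

private lemma lemA {w : ℝ} (hw : 1 ≤ w) : 2 * Real.log w ≤ w - 1/w := by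
  have h := aux_mono (fun x => x - 1/x - 2 * Real.log x) (fun x => 1 + 1/x^2 - 2/x)
    (fun x hx => by
      have hx0 : x ≠ 0 := by linarith
      have h1 : HasDerivAt (fun x : ℝ => x - 1/x - 2 * Real.log x)
          (1 - (-(1/x^2)) - 2 * (1/x)) x := by
        have := ((hasDerivAt_id x).sub ((hasDerivAt_inv hx0))).sub
          ((Real.hasDerivAt_log hx0).const_mul 2)
        have e1 : (fun x : ℝ => x - 1/x - 2 * Real.log x)
            = ((id - fun y => y⁻¹) - fun y => 2 * Real.log y) := by
          funext y; simp [one_div]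
        rw [e1]
        exact this.congr_deriv (by ring)
      convert h1 using 1
      ring)
    (fun x hx => by
      have hx0 : (0:ℝ) < x := by linarith
      have h2 : 0 ≤ (x-1)^2 / x^2 := by positivity
      have he : (x-1)^2/x^2 = 1 + 1/x^2 - 2/x := by field_simp; ring
      linarith [he ▸ h2])
    hw
  simp only [one_div, Real.log_one] at h
  rw [one_div]
  nlinarith [h]

private lemma lemB {q : ℝ} (hq : 1 ≤ q) : (q - 1) - (q-1)^2/2 ≤ Real.log q := by
  have h := aux_mono (fun x => Real.log x - (x-1) + (x-1)^2/2) (fun x => 1/x - 1 + (x-1))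
    (fun x hx => by
      have hx0 : x ≠ 0 := by linarith
      have h1 : HasDerivAt (fun x : ℝ => Real.log x - (x-1) + (x-1)^2/2)
          (1/x - (1 - 0) + (2*(x-1)*(1-0))/2) x := by
        have hlog := Real.hasDerivAt_log hx0
        have hsub : HasDerivAt (fun x : ℝ => x - 1) (1 - 0) x :=
          (hasDerivAt_id x).sub (hasDerivAt_const x 1)
        have := (hlog.sub hsub).add ((hsub.pow 2).div_const 2)
        have e1 : (fun x : ℝ => Real.log x - (x-1) + (x-1)^2/2)
            = ((Real.log - fun x => x - 1) + fun x => ((fun x : ℝ => x - 1) ^ 2) x / 2) := by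
          funext y; simp
        rw [e1]
        exact this.congr_deriv (by norm_num only [Nat.cast_ofNat, one_div]; ring)
      convert h1 using 1
      ring)
    (fun x hx => by
      have hx0 : (0:ℝ) < x := by linarith
      have h2 : 0 ≤ (x-1)^2/x := by positivity
      have he : (x-1)^2/x = x + 1/x - 2 := by field_simp; ring
      nlinarith)
    hq
  simp only [Real.log_one] at h
  nlinarith [h]

private lemma lemC {t u : ℝ} (ht0 : 0 < t) (hu0 : 0 < u) (ht2 : 2 ≤ t^2) (hu2 : 2 ≤ u^2) :
    0 ≤ (t-u)^2/4 + 1 - t/u + (Real.log t - Real.log u) := by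
  rw [← Real.log_div (ne_of_gt ht0) (ne_of_gt hu0)]
  rcases le_total u t with h | h
  · have hq1 : 1 ≤ t/u := (one_le_div hu0).2 h
    have hlog := lemB hq1
    have he : t/u - 1 = (t-u)/u := by field_simp
    rw [he] at hlog
    have hkey : ((t-u)/u)^2/2 ≤ (t-u)^2/4 := by
      rw [div_pow, div_div]
      apply div_le_div_of_nonneg_left (sq_nonneg _) (by norm_num) ?_
      nlinarith
    have he2 : t/u = 1 + (t-u)/u := by field_simp; ring
    linarith
  · set w := Real.sqrt (u/t) with hwdef
    have hq1 : 1 ≤ u/t := (one_le_div ht0).2 h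
    have hw1 : 1 ≤ w := Real.one_le_sqrt.2 hq1
    have hw0 : 0 < w := by linarith
    have hw2 : w^2 = u/t := Real.sq_sqrt (by positivity)
    have hu : u = t * w^2 := by field_simp at hw2; linarith
    have hlogtu : Real.log (t/u) = -(2 * Real.log w) := by
      have h1 : Real.log (t/u) = - Real.log (u/t) := by
        rw [← Real.log_inv]; congr 1; field_simp
      rw [h1, ← hw2, Real.log_pow]
      push_cast; ring
    have hA := lemA hw1
    have hbound : 1/w - w ≤ Real.log (t/u) := by rw [hlogtu]; linarith
    have htu : t/u = 1/w^2 := by rw [hu]; field_simp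
    have hcube : 0 ≤ (w-1)^3 * (w^3 + 3*w^2 + 4*w + 2) := by
      apply mul_nonneg
      · have : 0 ≤ w - 1 := by linarith
        positivity
      · positivity
    have ht2' : 2 * ((w^2-1)^2) ≤ t^2 * ((w^2-1)^2) :=
      mul_le_mul_of_nonneg_right ht2 (sq_nonneg _)
    have hgoal : 0 ≤ (t - u)^2/4 + 1 - 1/w^2 + (1/w - w) := by
      rw [hu]
      have hexp : (t - t*w^2)^2 = t^2 * (w^2-1)^2 := by ring
      rw [hexp]
      have key : 0 ≤ 2*((w^2-1)^2)/4 + 1 - 1/w^2 + (1/w - w) := by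
        have hident : 2*((w^2-1)^2)/4 + 1 - 1/w^2 + (1/w - w)
            = (w-1)^3 * (w^3 + 3*w^2 + 4*w + 2) / (2*w^2) := by
          field_simp
          ring
        rw [hident]
        positivity
      linarith
    linarith [htu]

set_option maxHeartbeats 1000000 in
/-- With `J₁(x) = (1/2)log 2 − (1/2)x√(x²−2) − log(−x + √(x²−2))` for `x ≤ −√2`,
`φ(x) = −x²/2 − μx/√(−D''(0))`, `D''(0) < 0` and `μ > √(−2D''(0))`, the function
`φ − J₁` on `(−∞, −√2]` attains its maximum at
`x* = −μ/√(−4D''(0)) − √(−D''(0))/μ < −√2`, with maximal value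
`μ²/(−4D''(0)) + log(μ/√(−2D''(0))) + 1/2`. -/
theorem stmt18 (D''0 μ : ℝ) (hD : D''0 < 0) (hμ : Real.sqrt (-2 * D''0) < μ) :
    (-μ / Real.sqrt (-4 * D''0) - Real.sqrt (-D''0) / μ) < -Real.sqrt 2 ∧
    (∀ x : ℝ, x ≤ -Real.sqrt 2 →
      (-x ^ 2 / 2 - μ * x / Real.sqrt (-D''0)) -
          ((1 / 2) * Real.log 2 - (1 / 2) * x * Real.sqrt (x ^ 2 - 2) -
            Real.log (-x + Real.sqrt (x ^ 2 - 2)))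
        ≤ (-((-μ / Real.sqrt (-4 * D''0) - Real.sqrt (-D''0) / μ)) ^ 2 / 2 -
              μ * (-μ / Real.sqrt (-4 * D''0) - Real.sqrt (-D''0) / μ) /
                Real.sqrt (-D''0)) -
          ((1 / 2) * Real.log 2 -
            (1 / 2) * (-μ / Real.sqrt (-4 * D''0) - Real.sqrt (-D''0) / μ) *
              Real.sqrt ((-μ / Real.sqrt (-4 * D''0) - Real.sqrt (-D''0) / μ) ^ 2 - 2) -
            Real.log (-(-μ / Real.sqrt (-4 * D''0) - Real.sqrt (-D''0) / μ) +
              Real.sqrt ((-μ / Real.sqrt (-4 * D''0) - Real.sqrt (-D''0) / μ) ^ 2 - 2)))) ∧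
    (-((-μ / Real.sqrt (-4 * D''0) - Real.sqrt (-D''0) / μ)) ^ 2 / 2 -
          μ * (-μ / Real.sqrt (-4 * D''0) - Real.sqrt (-D''0) / μ) / Real.sqrt (-D''0)) -
        ((1 / 2) * Real.log 2 -
          (1 / 2) * (-μ / Real.sqrt (-4 * D''0) - Real.sqrt (-D''0) / μ) *
            Real.sqrt ((-μ / Real.sqrt (-4 * D''0) - Real.sqrt (-D''0) / μ) ^ 2 - 2) -
          Real.log (-(-μ / Real.sqrt (-4 * D''0) - Real.sqrt (-D''0) / μ) +
            Real.sqrt ((-μ / Real.sqrt (-4 * D''0) - Real.sqrt (-D''0) / μ) ^ 2 - 2)))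
      = μ ^ 2 / (-4 * D''0) + Real.log (μ / Real.sqrt (-2 * D''0)) + 1 / 2 := by
  have hD0 : (0:ℝ) < -D''0 := by linarith
  have hs0 : 0 < Real.sqrt (-D''0) := Real.sqrt_pos.2 hD0
  set s := Real.sqrt (-D''0) with hsdef
  have hs2 : s^2 = -D''0 := Real.sq_sqrt (le_of_lt hD0)
  have hsne : s ≠ 0 := ne_of_gt hs0
  have h2s : Real.sqrt (-2 * D''0) = Real.sqrt 2 * s := by
    rw [hsdef, ← Real.sqrt_mul (by norm_num : (0:ℝ) ≤ 2)]
    congr 1; ring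
  have h4s : Real.sqrt (-4 * D''0) = 2 * s := by
    rw [hsdef, show (-4 * D''0) = 4 * (-D''0) by ring,
      Real.sqrt_mul (by norm_num : (0:ℝ) ≤ 4),
      show (4:ℝ) = 2^2 by norm_num, Real.sqrt_sq (by norm_num : (0:ℝ) ≤ 2)]
  have hsqrt2 : (0:ℝ) < Real.sqrt 2 := Real.sqrt_pos.2 (by norm_num)
  have hsq2 : (Real.sqrt 2)^2 = 2 := Real.sq_sqrt (by norm_num)
  have hμ0 : 0 < μ := lt_trans (by rw [h2s]; positivity) hμ
  have hμne : μ ≠ 0 := ne_of_gt hμ0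
  set t := μ / s with htdef
  have ht : Real.sqrt 2 < t := by
    rw [htdef, lt_div_iff₀ hs0]
    rw [h2s] at hμ; exact hμ
  have ht0 : 0 < t := lt_trans hsqrt2 ht
  have htne : t ≠ 0 := ne_of_gt ht0
  have ht2 : 2 < t^2 := by nlinarith
  have hμts : μ = t * s := by rw [htdef]; field_simp
  set X := -μ / Real.sqrt (-4 * D''0) - s / μ with hXdef
  have hX : X = -(t/2 + 1/t) := by
    rw [hXdef, h4s, hμts]; field_simp; ring
  have hhalf : 0 ≤ t/2 - 1/t := by
    rw [show t/2 - 1/t = (t^2 - 2)/(2*t) by field_simp]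
    exact div_nonneg (by linarith) (by positivity)
  have hXsq : X^2 - 2 = (t/2 - 1/t)^2 := by
    rw [hX]; field_simp; ring
  have hXsqrt : Real.sqrt (X^2 - 2) = t/2 - 1/t := by
    rw [hXsq, Real.sqrt_sq hhalf]
  have hXval : -X + Real.sqrt (X^2 - 2) = t := by
    rw [hXsqrt, hX]; field_simp; ring
  -- value at the maximizer
  have hval : (-X ^ 2 / 2 - μ * X / s) -
      ((1 / 2) * Real.log 2 - (1 / 2) * X * Real.sqrt (X ^ 2 - 2) -
        Real.log (-X + Real.sqrt (X ^ 2 - 2)))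
      = t^2/4 + 1/2 + Real.log t - (1/2) * Real.log 2 := by
    rw [hXval, hXsqrt, hX, hμts]
    field_simp
    ring
  clear_value X t s
  clear hXdef htdef hsdef
  refine ⟨?_, ?_, ?_⟩
  · -- X < -√2
    rw [hX]
    have hpos : 0 < (t - Real.sqrt 2)^2 := by
      have : 0 < t - Real.sqrt 2 := by linarith
      positivity
    rw [neg_lt_neg_iff, show t/2 + 1/t = (t^2+2)/(2*t) by field_simp,
      lt_div_iff₀ (by positivity)]
    nlinarith
  · -- maximality
    intro x hx
    rw [hval]
    have hx2 : 2 ≤ x^2 := by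
      have h := pow_le_pow_left₀ (Real.sqrt_nonneg 2) (show Real.sqrt 2 ≤ -x by linarith) 2
      nlinarith [h, hsq2]
    have hsx : Real.sqrt (x^2 - 2) ^ 2 = x^2 - 2 := Real.sq_sqrt (by linarith)
    set u := -x + Real.sqrt (x^2 - 2) with hu
    have hu2 : Real.sqrt 2 ≤ u := by
      have := Real.sqrt_nonneg (x^2 - 2); rw [hu]; linarith
    have hu0 : 0 < u := lt_of_lt_of_le hsqrt2 hu2
    have hune : u ≠ 0 := ne_of_gt hu0
    have huu2 : 2 ≤ u^2 := by
      have h := pow_le_pow_left₀ (Real.sqrt_nonneg 2) hu2 2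
      linarith [h, hsq2]
    have hsqx : Real.sqrt (x^2 - 2) = u + x := by rw [hu]; ring
    have hprod : u * (-x - (u + x)) = 2 := by
      have h1 : u * (-x - (u + x)) = x^2 - Real.sqrt (x^2-2)^2 := by
        rw [← hsqx, hu]; ring
      rw [hsx] at h1; linarith
    have hxu : x = -(u/2 + 1/u) := by
      have h2 : -2*(u*x) - u^2 = 2 := by nlinarith [hprod]
      field_simp
      linarith [h2]
    have hsqu : Real.sqrt (x^2 - 2) = u/2 - 1/u := by
      rw [hsqx, hxu]; ring
    rw [hsqu, hxu, hμts]
    have hC := lemC ht0 hu0 (le_of_lt ht2) huu2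
    have key : (-(-(u / 2 + 1 / u)) ^ 2 / 2 - t * s * -(u / 2 + 1 / u) / s) -
        ((1 / 2) * Real.log 2 - (1 / 2) * -(u / 2 + 1 / u) * (u / 2 - 1 / u) -
          Real.log u)
        = (t^2/4 + 1/2 + Real.log t - (1/2) * Real.log 2)
          - ((t - u)^2/4 + 1 - t/u + (Real.log t - Real.log u)) := by
      field_simp
      ring
    rw [key]
    linarith
  · -- value equality
    rw [hval, h2s, hμts]
    have hlog : Real.log (t * s / (Real.sqrt 2 * s)) = Real.log t - (1/2) * Real.log 2 := by
      rw [show t * s / (Real.sqrt 2 * s) = t / Real.sqrt 2 by field_simp,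
        Real.log_div htne (ne_of_gt hsqrt2), Real.log_sqrt (by norm_num)]
      ring
    rw [hlog]
    have h1 : (t*s)^2 / (-4 * D''0) = t^2/4 := by
      rw [show (-4 * D''0) = 4 * s^2 by rw [hs2]; ring]
      field_simp
    rw [h1]
    ring
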